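/- arXiv:2509.10806 — 4 statements merged into one kernel-verified Lean document; each statement's English description precedes it below -/
import Mathlib

section
/- Let ξ, η, ζ ∈ ℝ² \ {0} with ξ = η + ζ, and let a, b ∈ ℂ² satisfy η·a = 0 and ζ·b = 0 (bilinear, unconjugated dot product). Then a ⊙_ξ b = (i/2)·sign(ξ×η)·(a·e_{η⊥})·(b·e_{ζ⊥})·sin(θ(ξ,η) − θ(ξ,ζ))·e_{ξ⊥}, where ξ⊥ = (−ξ₂, ξ₁), e_{ξ⊥} = ξ⊥/|ξ⊥|, ξ×η = ξ₁η₂ − ξ₂η₁, sign denotes the sign function, and θ(u,v) ∈ [0,π] is the Euclidean angle between nonzero vectors u, v ∈ ℝ². -/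
open MeasureTheory Set

/-- The bilinear (unconjugated) dot product on `ℂ²`. -/
noncomputable def dotC (a b : EuclideanSpace ℂ (Fin 2)) : ℂ := ∑ j, a j * b j

/-- The canonical inclusion of `ℝ²` into `ℂ²`. -/
noncomputable def complexify (ξ : EuclideanSpace ℝ (Fin 2)) : EuclideanSpace ℂ (Fin 2) :=
  (WithLp.equiv 2 (Fin 2 → ℂ)).symm fun j => (ξ j : ℂ)

/-- The rotation of `ξ` by `+90°`: `ξ⊥ = (−ξ₂, ξ₁)`. -/
noncomputable def perp (ξ : EuclideanSpace ℝ (Fin 2)) : EuclideanSpace ℝ (Fin 2) :=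
  (WithLp.equiv 2 (Fin 2 → ℝ)).symm ![-(ξ 1), ξ 0]

/-- The unit vector `e_{ξ⊥} = ξ⊥/|ξ⊥|`. -/
noncomputable def unitPerp (ξ : EuclideanSpace ℝ (Fin 2)) : EuclideanSpace ℝ (Fin 2) :=
  ‖perp ξ‖⁻¹ • perp ξ

/-- The unit vector `e_ξ = ξ/|ξ|`, complexified. -/
noncomputable def eC (ξ : EuclideanSpace ℝ (Fin 2)) : EuclideanSpace ℂ (Fin 2) :=
  complexify (‖ξ‖⁻¹ • ξ)

/-- The projection `π_{ξ⊥} a = a − (e_ξ·a) e_ξ` onto the hyperplane orthogonal to `ξ`. -/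
noncomputable def projPerp (ξ : EuclideanSpace ℝ (Fin 2)) (a : EuclideanSpace ℂ (Fin 2)) :
    EuclideanSpace ℂ (Fin 2) :=
  a - dotC (eC ξ) a • eC ξ

/-- The symmetrized product `a ⊙_ξ b = −(i/2)((e_ξ·b)π_{ξ⊥}a + (e_ξ·a)π_{ξ⊥}b)`. -/
noncomputable def odot (ξ : EuclideanSpace ℝ (Fin 2)) (a b : EuclideanSpace ℂ (Fin 2)) :
    EuclideanSpace ℂ (Fin 2) :=
  (-(Complex.I/2)) • (dotC (eC ξ) b • projPerp ξ a + dotC (eC ξ) a • projPerp ξ b)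

/-- The planar cross product `ξ×η = ξ₁η₂ − ξ₂η₁`. -/
noncomputable def cross (ξ η : EuclideanSpace ℝ (Fin 2)) : ℝ := ξ 0 * η 1 - ξ 1 * η 0

lemma my_norm_sq (ξ : EuclideanSpace ℝ (Fin 2)) : ‖ξ‖^2 = ξ 0^2 + ξ 1^2 := by
  rw [EuclideanSpace.norm_eq, Real.sq_sqrt (by positivity)]
  simp [Fin.sum_univ_two, sq_abs]

lemma my_inner (ξ η : EuclideanSpace ℝ (Fin 2)) : (inner ℝ ξ η : ℝ) = ξ 0 * η 0 + ξ 1 * η 1 := by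
  simp [PiLp.inner_apply, Fin.sum_univ_two]
  ring

lemma norm_perp (ξ : EuclideanSpace ℝ (Fin 2)) : ‖perp ξ‖ = ‖ξ‖ := by
  rw [EuclideanSpace.norm_eq, EuclideanSpace.norm_eq]
  congr 1
  simp [Fin.sum_univ_two, perp, WithLp.equiv_symm_apply, PiLp.toLp_apply]
  ring

lemma sin_angle_eq (ξ η : EuclideanSpace ℝ (Fin 2)) (hξ : ξ ≠ 0) (hη : η ≠ 0) :
    Real.sin (InnerProductGeometry.angle ξ η) = |cross ξ η| / (‖ξ‖ * ‖η‖) := by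
  have h := InnerProductGeometry.sin_angle_mul_norm_mul_norm ξ η
  have hc : (inner ℝ ξ ξ : ℝ) * inner ℝ η η - inner ℝ ξ η * inner ℝ ξ η = (cross ξ η)^2 := by
    rw [my_inner, my_inner, my_inner]; unfold cross; ring
  rw [hc, Real.sqrt_sq_eq_abs] at h
  have h1 : ‖ξ‖ ≠ 0 := norm_ne_zero_iff.2 hξ
  have h2 : ‖η‖ ≠ 0 := norm_ne_zero_iff.2 hη
  field_simp
  linarith [h]

lemma real_sign_mul_abs (x : ℝ) : Real.sign x * |x| = x := by
  rcases lt_trichotomy x 0 with h | h | h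
  · rw [Real.sign_of_neg h, abs_of_neg h]; ring
  · simp [h]
  · rw [Real.sign_of_pos h, abs_of_pos h]; ring

open InnerProductGeometry in
lemma key_lemma (ξ η ζ : EuclideanSpace ℝ (Fin 2))
    (hξ : ξ ≠ 0) (hη : η ≠ 0) (hζ : ζ ≠ 0) (hsum : ξ = η + ζ) :
    Real.sign (cross ξ η) * Real.sin (angle ξ η - angle ξ ζ) =
      cross ξ η * ((ζ 0^2 + ζ 1^2) - (η 0^2 + η 1^2)) / (‖ξ‖^2 * ‖η‖ * ‖ζ‖) := by
  have hx0 : ξ 0 = η 0 + ζ 0 := by rw [hsum]; rfl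
  have hx1 : ξ 1 = η 1 + ζ 1 := by rw [hsum]; rfl
  have hXζ : cross ξ ζ = - cross ξ η := by unfold cross; rw [hx0, hx1]; ring
  have hsx := real_sign_mul_abs (cross ξ η)
  have hN : ‖ξ‖ ≠ 0 := norm_ne_zero_iff.2 hξ
  have hM : ‖η‖ ≠ 0 := norm_ne_zero_iff.2 hη
  have hK : ‖ζ‖ ≠ 0 := norm_ne_zero_iff.2 hζ
  rw [Real.sin_sub, sin_angle_eq _ _ hξ hη, sin_angle_eq _ _ hξ hζ, cos_angle, cos_angle,
    my_inner, my_inner, hXζ, abs_neg]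
  rw [show cross ξ η = ζ 0 * η 1 - ζ 1 * η 0 by unfold cross; rw [hx0, hx1]; ring] at hsx ⊢
  rw [hx0, hx1]
  field_simp
  linear_combination ((ζ 0^2 + ζ 1^2) - (η 0^2 + η 1^2)) * hsx

lemma dot_perp_unitPerp (η : EuclideanSpace ℝ (Fin 2)) (hη : η ≠ 0) (t : ℂ) :
    dotC (t • complexify (perp η)) (complexify (unitPerp η)) = t * (‖η‖ : ℂ) := by
  have hM : ((‖η‖ : ℝ) : ℂ) ≠ 0 := Complex.ofReal_ne_zero.2 (norm_ne_zero_iff.2 hη)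
  have hM2 : ((‖η‖ : ℂ))^2 = (η 0 : ℂ)^2 + (η 1 : ℂ)^2 := by
    exact_mod_cast congrArg (Complex.ofReal) (my_norm_sq η)
  rw [unitPerp, norm_perp]
  simp only [dotC, complexify, perp, Fin.sum_univ_two,
    WithLp.equiv_symm_apply, PiLp.toLp_apply, PiLp.smul_apply, Matrix.cons_val_zero, Matrix.cons_val_one,
    Matrix.head_cons, smul_eq_mul, Complex.ofReal_mul, Complex.ofReal_neg, Complex.ofReal_inv]
  field_simp
  linear_combination (-t) * hM2

lemma decomp (η : EuclideanSpace ℝ (Fin 2)) (hη : η ≠ 0) (a : EuclideanSpace ℂ (Fin 2))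
    (ha : dotC (complexify η) a = 0) :
    ∃ t : ℂ, a = t • complexify (perp η) := by
  have h2 : (η 0 : ℂ)^2 + (η 1 : ℂ)^2 ≠ 0 := by
    have h3 : (η 0)^2 + (η 1)^2 ≠ 0 := by
      intro h
      apply hη
      have h0 : η 0 = 0 ∧ η 1 = 0 := by
        constructor <;> nlinarith [sq_nonneg (η 0), sq_nonneg (η 1)]
      ext j; fin_cases j <;> simp [h0.1, h0.2]
    intro h; exact h3 (Complex.ofReal_injective (by push_cast; exact h))
  refine ⟨(-(η 1 : ℂ) * a 0 + (η 0 : ℂ) * a 1) / ((η 0 : ℂ)^2 + (η 1 : ℂ)^2), ?_⟩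
  have ha' : (η 0 : ℂ) * a 0 + (η 1 : ℂ) * a 1 = 0 := by
    simpa [dotC, Fin.sum_univ_two, complexify] using ha
  ext j
  fin_cases j <;>
      simp only [PiLp.smul_apply, complexify, perp, WithLp.equiv_symm_apply, PiLp.toLp_apply,
        Matrix.cons_val_zero, Matrix.cons_val_one, Matrix.head_cons, smul_eq_mul,
        Complex.ofReal_neg, Fin.zero_eta, Fin.mk_one, Fin.isValue] <;> field_simp
  · linear_combination (η 0 : ℂ) * ha'
  · linear_combination (η 1 : ℂ) * ha'

set_option maxHeartbeats 2000000 in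
open InnerProductGeometry in
theorem stmt1 (ξ η ζ : EuclideanSpace ℝ (Fin 2))
    (hξ : ξ ≠ 0) (hη : η ≠ 0) (hζ : ζ ≠ 0) (hsum : ξ = η + ζ)
    (a b : EuclideanSpace ℂ (Fin 2))
    (ha : dotC (complexify η) a = 0) (hb : dotC (complexify ζ) b = 0) :
    odot ξ a b =
      ((Complex.I/2) * (Real.sign (cross ξ η) : ℂ)
          * dotC a (complexify (unitPerp η)) * dotC b (complexify (unitPerp ζ))
          * (Real.sin (InnerProductGeometry.angle ξ η - InnerProductGeometry.angle ξ ζ) : ℂ))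
        • complexify (unitPerp ξ) := by
  subst hsum
  obtain ⟨t, hat⟩ := decomp η hη a ha
  obtain ⟨s, hbs⟩ := decomp ζ hζ b hb
  have hAe : dotC a (complexify (unitPerp η)) = t * (‖η‖ : ℂ) := by
    rw [hat]; exact dot_perp_unitPerp η hη t
  have hBe : dotC b (complexify (unitPerp ζ)) = s * (‖ζ‖ : ℂ) := by
    rw [hbs]; exact dot_perp_unitPerp ζ hζ s
  have key := key_lemma (η+ζ) η ζ hξ hη hζ rfl
  have hC : (Real.sign (cross (η+ζ) η) : ℂ) * (Real.sin (angle (η+ζ) η - angle (η+ζ) ζ) : ℂ)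
      = ((cross (η+ζ) η * ((ζ 0^2 + ζ 1^2) - (η 0^2 + η 1^2)) / (‖η+ζ‖^2 * ‖η‖ * ‖ζ‖) : ℝ) : ℂ) := by
    exact_mod_cast congrArg (Complex.ofReal) key
  rw [hAe, hBe,
    show (Complex.I/2) * (Real.sign (cross (η+ζ) η) : ℂ) * (t * (‖η‖:ℂ)) * (s * (‖ζ‖:ℂ))
        * (Real.sin (angle (η+ζ) η - angle (η+ζ) ζ) : ℂ)
      = (Complex.I/2) * (t * (‖η‖:ℂ)) * (s * (‖ζ‖:ℂ))
        * ((Real.sign (cross (η+ζ) η) : ℂ) * (Real.sin (angle (η+ζ) η - angle (η+ζ) ζ) : ℂ)) from by ring,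
    hC, hat, hbs]
  have hNC : ((‖η+ζ‖ : ℝ) : ℂ) ≠ 0 := Complex.ofReal_ne_zero.2 (norm_ne_zero_iff.2 hξ)
  have hMC : ((‖η‖ : ℝ) : ℂ) ≠ 0 := Complex.ofReal_ne_zero.2 (norm_ne_zero_iff.2 hη)
  have hKC : ((‖ζ‖ : ℝ) : ℂ) ≠ 0 := Complex.ofReal_ne_zero.2 (norm_ne_zero_iff.2 hζ)
  have hN2 : ((‖η + ζ‖ : ℝ) : ℂ)^2 = (((η+ζ) 0 : ℝ):ℂ)^2 + (((η+ζ) 1 : ℝ):ℂ)^2 := by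
    exact_mod_cast congrArg (Complex.ofReal) (my_norm_sq (η+ζ))
  rw [show ((η+ζ) 0 : ℝ) = η 0 + ζ 0 from rfl, show ((η+ζ) 1 : ℝ) = η 1 + ζ 1 from rfl] at hN2
  push_cast at hN2
  rw [unitPerp, norm_perp]
  ext j
  fin_cases j
  all_goals
    simp only [odot, projPerp, eC, dotC, unitPerp, norm_perp, complexify, perp, cross,
      Fin.sum_univ_two, WithLp.equiv_symm_apply, PiLp.toLp_apply, PiLp.smul_apply, PiLp.add_apply,
      Fin.mk_zero, Fin.mk_one, Fin.isValue,
      PiLp.sub_apply, Matrix.cons_val_zero, Matrix.cons_val_one, Matrix.head_cons, smul_eq_mul]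
    push_cast
  all_goals field_simp
  all_goals ring_nf
  all_goals
    simp only [show ((‖η + ζ‖ : ℝ):ℂ)^7 = (((‖η + ζ‖ : ℝ):ℂ)^2)^3*((‖η + ζ‖ : ℝ):ℂ) from by ring,
      show ((‖η + ζ‖ : ℝ):ℂ)^6 = (((‖η + ζ‖ : ℝ):ℂ)^2)^3 from by ring,
      show ((‖η + ζ‖ : ℝ):ℂ)^5 = (((‖η + ζ‖ : ℝ):ℂ)^2)^2*((‖η + ζ‖ : ℝ):ℂ) from by ring,
      show ((‖η + ζ‖ : ℝ):ℂ)^4 = (((‖η + ζ‖ : ℝ):ℂ)^2)^2 from by ring,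
      show ((‖η + ζ‖ : ℝ):ℂ)^3 = (((‖η + ζ‖ : ℝ):ℂ)^2)*((‖η + ζ‖ : ℝ):ℂ) from by ring, hN2]
    ring
end

section
/- For every γ ∈ (1/2, 3/4), the following strict inequality between convergent integrals holds: ∫_0^2 r^{2−2γ} |1−r|^{2γ−2} dr < ∫_0^2 r^{2−4γ} |1−r|^{2γ−2} dr. Equivalently, ∫_{1/2}^∞ r^{−2} |1−r|^{2γ−2} dr < ∫_{1/2}^∞ |r − r²|^{2γ−2} dr. -/
open MeasureTheory Set



lemma II_shift {q : ℝ} (hq : -1 < q) (a b c : ℝ) :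
    IntervalIntegrable (fun x : ℝ => (x - c) ^ q) volume a b := by
  have h := (intervalIntegral.intervalIntegrable_rpow' (a := a - c) (b := b - c) hq).comp_sub_right c
  simpa using h

lemma II_oneSub {q : ℝ} (hq : -1 < q) (a b : ℝ) :
    IntervalIntegrable (fun x : ℝ => (1 - x) ^ q) volume a b := by
  have h := (intervalIntegral.intervalIntegrable_rpow' (a := 1 - a) (b := 1 - b) hq).comp_sub_left 1
  simpa using h

lemma main_int {p q : ℝ} (hp : -1 < p) (hq : -1 < q) :
    IntegrableOn (fun r : ℝ => r ^ p * |1 - r| ^ q) (Ioo (0:ℝ) 2) volume := by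
  have habs : Continuous (fun x : ℝ => |1 - x|) := (continuous_const.sub continuous_id).abs
  have h1 : IntegrableOn (fun r : ℝ => r ^ p * |1 - r| ^ q) (Ioc (0:ℝ) (1/2)) volume := by
    have hx : IntervalIntegrable (fun x : ℝ => x ^ p) volume 0 (1/2) :=
      intervalIntegral.intervalIntegrable_rpow' hp
    have hcont : ContinuousOn (fun x : ℝ => |1 - x| ^ q) (uIcc (0:ℝ) (1/2)) := by
      apply ContinuousOn.rpow_const habs.continuousOn
      intro x hx
      rw [uIcc_of_le (by norm_num : (0:ℝ) ≤ 1/2)] at hx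
      exact Or.inl (abs_ne_zero.mpr (by cases hx; intro h; linarith))
    exact IntegrableOn.congr_fun (hx.continuousOn_mul hcont).1
      (fun x hx => mul_comm _ _) measurableSet_Ioc
  have h2 : IntegrableOn (fun r : ℝ => r ^ p * |1 - r| ^ q) (Ioc (1/2:ℝ) 1) volume := by
    have hx : IntervalIntegrable (fun x : ℝ => (1 - x) ^ q) volume (1/2) 1 := II_oneSub hq _ _
    have hcont : ContinuousOn (fun x : ℝ => x ^ p) (uIcc (1/2:ℝ) 1) := by
      apply ContinuousOn.rpow_const continuousOn_id
      intro x hx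
      rw [uIcc_of_le (by norm_num : (1/2:ℝ) ≤ 1)] at hx
      exact Or.inl (by cases hx; intro h; simp_all; linarith)
    refine IntegrableOn.congr_fun (hx.continuousOn_mul hcont).1 (fun x hx => ?_) measurableSet_Ioc
    rw [abs_of_nonneg (by linarith [hx.2] : (0:ℝ) ≤ 1 - x)]
  have h3 : IntegrableOn (fun r : ℝ => r ^ p * |1 - r| ^ q) (Ioc (1:ℝ) (3/2)) volume := by
    have hx : IntervalIntegrable (fun x : ℝ => (x - 1) ^ q) volume 1 (3/2) := II_shift hq _ _ _
    have hcont : ContinuousOn (fun x : ℝ => x ^ p) (uIcc (1:ℝ) (3/2)) := by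
      apply ContinuousOn.rpow_const continuousOn_id
      intro x hx
      rw [uIcc_of_le (by norm_num : (1:ℝ) ≤ 3/2)] at hx
      exact Or.inl (by cases hx; intro h; simp_all; linarith)
    refine IntegrableOn.congr_fun (hx.continuousOn_mul hcont).1 (fun x hx => ?_) measurableSet_Ioc
    rw [abs_sub_comm, abs_of_nonneg (by linarith [hx.1] : (0:ℝ) ≤ x - 1)]
  have h4 : IntegrableOn (fun r : ℝ => r ^ p * |1 - r| ^ q) (Icc (3/2:ℝ) 2) volume := by
    apply ContinuousOn.integrableOn_Icc
    apply ContinuousOn.mul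
    · exact ContinuousOn.rpow_const continuousOn_id
        (fun x hx => Or.inl (by intro h; rw [h] at hx; simp [Set.mem_Icc] at hx; norm_num at hx))
    · exact ContinuousOn.rpow_const habs.continuousOn
        (fun x hx => Or.inl (abs_ne_zero.mpr (by intro h; simp [Set.mem_Icc] at hx; linarith [hx.1])))
  have hsub : Ioo (0:ℝ) 2 ⊆ (Ioc (0:ℝ) (1/2) ∪ Ioc (1/2:ℝ) 1 ∪ Ioc (1:ℝ) (3/2)) ∪ Icc (3/2:ℝ) 2 := by
    intro x hx
    simp only [Set.mem_Ioo] at hx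
    simp only [Set.mem_union, Set.mem_Ioc, Set.mem_Icc]
    rcases le_or_gt x (1/2) with h | h
    · exact Or.inl (Or.inl (Or.inl ⟨hx.1, h⟩))
    rcases le_or_gt x 1 with h' | h'
    · exact Or.inl (Or.inl (Or.inr ⟨h, h'⟩))
    rcases le_or_gt x (3/2) with h'' | h''
    · exact Or.inl (Or.inr ⟨h', h''⟩)
    · exact Or.inr ⟨h''.le, hx.2.le⟩
  exact (((h1.union h2).union h3).union h4).mono_set hsub


lemma beta_int {p q : ℝ} (hp : -1 < p) (hq : -1 < q) :
    IntegrableOn (fun r : ℝ => r ^ p * (1 - r) ^ q) (Ioo (0:ℝ) 1) volume := by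
  refine IntegrableOn.congr_fun ((main_int hp hq).mono_set ?_) (fun x hx => ?_) measurableSet_Ioo
  · exact Set.Ioo_subset_Ioo le_rfl (by norm_num)
  · rw [abs_of_nonneg (by linarith [hx.2] : (0:ℝ) ≤ 1 - x)]

lemma bern {r γ : ℝ} (hr : 0 < r) (hγ : 1 ≤ 2*γ) : r + 2*γ*(1-r) ≤ r ^ (1-2*γ) := by
  have h0 : -1 ≤ r⁻¹ - 1 := by
    have := inv_pos.mpr hr; linarith
  have h := one_add_mul_self_le_rpow_one_add h0 hγ
  have h1 : (1 : ℝ) + (r⁻¹ - 1) = r⁻¹ := by ring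
  rw [h1] at h
  have h2 : (r⁻¹) ^ (2*γ) = r ^ (1-2*γ) * r⁻¹ := by
    rw [Real.inv_rpow hr.le, ← Real.rpow_neg hr.le,
      show (1 - 2*γ : ℝ) = -(2*γ) + 1 by ring, Real.rpow_add hr, Real.rpow_one]
    field_simp
  rw [h2] at h
  have := mul_le_mul_of_nonneg_right h hr.le
  calc r + 2*γ*(1-r) = (1 + 2*γ*(r⁻¹-1)) * r := by field_simp
  _ ≤ (r ^ (1-2*γ) * r⁻¹) * r := this
  _ = r ^ (1-2*γ) := by field_simp

lemma L1 {γ : ℝ} (hγ1 : 1/2 < γ) (hγ2 : γ < 3/4) :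
    (1:ℝ) ≤ ∫ r in Ioo (0:ℝ) 1, r ^ (1-2*γ) * (1-r) ^ (2*γ-1) := by
  have hp : (-1:ℝ) < 1-2*γ := by linarith
  have hq : (-1:ℝ) < 2*γ-1 := by linarith
  have hint1 := beta_int hp hq
  have hint2 := beta_int hq hp
  -- reflection: ∫ (1-r)^(1-2γ) * r^(2γ-1) = ∫ r^(1-2γ) * (1-r)^(2γ-1)
  have hrefl : ∫ r in Ioo (0:ℝ) 1, r ^ (2*γ-1) * (1-r) ^ (1-2*γ)
      = ∫ r in Ioo (0:ℝ) 1, r ^ (1-2*γ) * (1-r) ^ (2*γ-1) := by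
    rw [← integral_Ioc_eq_integral_Ioo, ← integral_Ioc_eq_integral_Ioo,
      ← intervalIntegral.integral_of_le (by norm_num : (0:ℝ) ≤ 1),
      ← intervalIntegral.integral_of_le (by norm_num : (0:ℝ) ≤ 1)]
    have := intervalIntegral.integral_comp_sub_left
      (a := 0) (b := 1) (fun x : ℝ => x ^ (2*γ-1) * (1-x) ^ (1-2*γ)) 1
    simp only [sub_self, sub_zero] at this
    rw [← this]
    congr 1
    funext x
    simp only [sub_sub_cancel]
    ring
  have hconst : ∫ r in Ioo (0:ℝ) 1, (2:ℝ) = 2 := by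
    simp [Real.volume_Ioo]
  have hmono : ∫ r in Ioo (0:ℝ) 1, (2:ℝ)
      ≤ ∫ r in Ioo (0:ℝ) 1,
        (r ^ (1-2*γ) * (1-r) ^ (2*γ-1) + r ^ (2*γ-1) * (1-r) ^ (1-2*γ)) := by
    apply setIntegral_mono_on
    · exact integrableOn_const (by simp [Real.volume_Ioo])
    · exact hint1.add hint2
    · exact measurableSet_Ioo
    · intro x hx
      obtain ⟨hx0, hx1⟩ := hx
      have h1x : (0:ℝ) < 1 - x := by linarith
      set a := x ^ (1-2*γ) * (1-x) ^ (2*γ-1) with ha'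
      set b := x ^ (2*γ-1) * (1-x) ^ (1-2*γ) with hb'
      have ha : 0 < a := mul_pos (Real.rpow_pos_of_pos hx0 _) (Real.rpow_pos_of_pos h1x _)
      have hab : a * b = 1 := by
        rw [ha', hb']
        calc x ^ (1-2*γ) * (1-x) ^ (2*γ-1) * (x ^ (2*γ-1) * (1-x) ^ (1-2*γ))
            = (x ^ (1-2*γ) * x ^ (2*γ-1)) * ((1-x) ^ (2*γ-1) * (1-x) ^ (1-2*γ)) := by ring
          _ = 1 := by
              rw [← Real.rpow_add hx0, ← Real.rpow_add h1x,
                show (1-2*γ) + (2*γ-1) = 0 by ring, show (2*γ-1) + (1-2*γ) = 0 by ring,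
                Real.rpow_zero, Real.rpow_zero, mul_one]
      nlinarith [sq_nonneg (a - 1), ha]
  rw [integral_add hint1 hint2, hrefl, hconst] at hmono
  linarith

lemma L2 {γ : ℝ} (hγ1 : 1/2 < γ) :
    ∫ r in Ioo (1:ℝ) 2, (r-1) ^ (2*γ-1) = 1/(2*γ) := by
  have hq : (-1:ℝ) < 2*γ-1 := by linarith
  rw [← integral_Ioc_eq_integral_Ioo,
    ← intervalIntegral.integral_of_le (by norm_num : (1:ℝ) ≤ 2)]
  have := intervalIntegral.integral_comp_sub_right (a := 1) (b := 2)
    (fun x : ℝ => x ^ (2*γ-1)) 1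
  norm_num at this
  rw [this, integral_rpow (Or.inl hq)]
  rw [show (2*γ-1+1 : ℝ) = 2*γ by ring, Real.one_rpow,
    Real.zero_rpow (by positivity : (2*γ:ℝ) ≠ 0)]
  norm_num


lemma II_shift' {q : ℝ} (hq : -1 < q) :
    IntegrableOn (fun x : ℝ => (x - 1) ^ q) (Ioo (1:ℝ) 2) volume := by
  have h := (intervalIntegral.intervalIntegrable_rpow' (a := 0) (b := 1) hq).comp_sub_right 1
  norm_num at h
  exact ((intervalIntegrable_iff_integrableOn_Ioc_of_le (by norm_num : (1:ℝ) ≤ 2)).mp h).mono_set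
    Ioo_subset_Ioc_self

lemma split_int {F : ℝ → ℝ} (hF : IntegrableOn F (Ioo (0:ℝ) 2) volume) :
    ∫ r in Ioo (0:ℝ) 2, F r = (∫ r in Ioo (0:ℝ) 1, F r) + ∫ r in Ioo (1:ℝ) 2, F r := by
  have h1 : IntegrableOn F (Ioc (0:ℝ) 1) volume := by
    rw [integrableOn_Ioc_iff_integrableOn_Ioo]
    exact hF.mono_set (Ioo_subset_Ioo le_rfl (by norm_num))
  have h2 : IntegrableOn F (Ioc (1:ℝ) 2) volume := by
    rw [integrableOn_Ioc_iff_integrableOn_Ioo]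
    exact hF.mono_set (Ioo_subset_Ioo (by norm_num) le_rfl)
  rw [← integral_Ioc_eq_integral_Ioo,
    ← Set.Ioc_union_Ioc_eq_Ioc (by norm_num : (0:ℝ) ≤ 1) (by norm_num : (1:ℝ) ≤ 2),
    setIntegral_union (Set.Ioc_disjoint_Ioc_of_le le_rfl) measurableSet_Ioc h1 h2,
    integral_Ioc_eq_integral_Ioo, integral_Ioc_eq_integral_Ioo]

lemma key {γ : ℝ} (hγ1 : 1/2 < γ) (hγ2 : γ < 3/4) :
    ∫ r in Ioo (0:ℝ) 2, r ^ (2-2*γ) * |1-r| ^ (2*γ-2) <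
      ∫ r in Ioo (0:ℝ) 2, r ^ (2-4*γ) * |1-r| ^ (2*γ-2) := by
  have hq : (-1:ℝ) < 2*γ-2 := by linarith
  have hγ' : 1 ≤ 2*γ := by linarith
  have hf : IntegrableOn (fun r : ℝ => r ^ (2-2*γ) * |1-r| ^ (2*γ-2)) (Ioo (0:ℝ) 2) volume :=
    main_int (by linarith) hq
  have hg : IntegrableOn (fun r : ℝ => r ^ (2-4*γ) * |1-r| ^ (2*γ-2)) (Ioo (0:ℝ) 2) volume :=
    main_int (by linarith) hq
  set G : ℝ → ℝ := fun r => r ^ (2-4*γ) * |1-r| ^ (2*γ-2) - r ^ (2-2*γ) * |1-r| ^ (2*γ-2)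
    with hG
  have hGint : IntegrableOn G (Ioo (0:ℝ) 2) volume := hg.sub hf
  -- lower bound on (0,1)
  have hD1 : (2*γ : ℝ) ≤ ∫ r in Ioo (0:ℝ) 1, G r := by
    have hb : IntegrableOn (fun r : ℝ => 2*γ * (r ^ (1-2*γ) * (1-r) ^ (2*γ-1)))
        (Ioo (0:ℝ) 1) volume :=
      (beta_int (by linarith) (by linarith)).const_mul _
    have hmono : ∫ r in Ioo (0:ℝ) 1, 2*γ * (r ^ (1-2*γ) * (1-r) ^ (2*γ-1))
        ≤ ∫ r in Ioo (0:ℝ) 1, G r := by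
      apply setIntegral_mono_on hb
        (hGint.mono_set (Ioo_subset_Ioo le_rfl (by norm_num))) measurableSet_Ioo
      intro r hr
      obtain ⟨hr0, hr1⟩ := hr
      have h1r : (0:ℝ) < 1 - r := by linarith
      rw [hG]
      simp only
      rw [abs_of_nonneg h1r.le]
      set s := r ^ (1-2*γ) with hs
      set t := (1-r) ^ (2*γ-2) with ht
      have spos : 0 < s := Real.rpow_pos_of_pos hr0 _
      have tpos : 0 < t := Real.rpow_pos_of_pos h1r _
      have e1 : r ^ (2-4*γ) = s * s := by
        rw [hs, ← Real.rpow_add hr0]; congr 1; ring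
      have e2 : r ^ (2-2*γ) = s * r := by
        rw [hs, ← Real.rpow_add_one hr0.ne']; congr 1; ring
      have e3 : (1-r) ^ (2*γ-1) = t * (1-r) := by
        rw [ht, ← Real.rpow_add_one h1r.ne']; congr 1; ring
      have hbern := bern hr0 hγ'
      rw [e1, e2, e3]
      nlinarith [mul_nonneg (mul_pos spos tpos).le
        (by linarith : (0:ℝ) ≤ s - r - 2*γ*(1-r))]
    have hval : ∫ r in Ioo (0:ℝ) 1, 2*γ * (r ^ (1-2*γ) * (1-r) ^ (2*γ-1)) = 2*γ *
        ∫ r in Ioo (0:ℝ) 1, r ^ (1-2*γ) * (1-r) ^ (2*γ-1) := integral_const_mul _ _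
    have := L1 hγ1 hγ2
    nlinarith
  -- lower bound on (1,2)
  have hD2 : (-1 : ℝ) ≤ ∫ r in Ioo (1:ℝ) 2, G r := by
    have hb : IntegrableOn (fun r : ℝ => -(2*γ * (r-1) ^ (2*γ-1))) (Ioo (1:ℝ) 2) volume :=
      ((II_shift' (by linarith)).const_mul _).neg
    have hmono : ∫ r in Ioo (1:ℝ) 2, -(2*γ * (r-1) ^ (2*γ-1))
        ≤ ∫ r in Ioo (1:ℝ) 2, G r := by
      apply setIntegral_mono_on hb
        (hGint.mono_set (Ioo_subset_Ioo (by norm_num) le_rfl)) measurableSet_Ioo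
      intro r hr
      obtain ⟨hr1, hr2⟩ := hr
      have hr0 : (0:ℝ) < r := by linarith
      have hr1' : (0:ℝ) < r - 1 := by linarith
      rw [hG]
      simp only
      rw [abs_sub_comm, abs_of_nonneg hr1'.le]
      set s := r ^ (1-2*γ) with hs
      set t := (r-1) ^ (2*γ-2) with ht
      have spos : 0 < s := Real.rpow_pos_of_pos hr0 _
      have s1 : s < 1 := Real.rpow_lt_one_of_one_lt_of_neg hr1 (by linarith)
      have tpos : 0 < t := Real.rpow_pos_of_pos hr1' _
      have e1 : r ^ (2-4*γ) = s * s := by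
        rw [hs, ← Real.rpow_add hr0]; congr 1; ring
      have e2 : r ^ (2-2*γ) = s * r := by
        rw [hs, ← Real.rpow_add_one hr0.ne']; congr 1; ring
      have e3 : (r-1) ^ (2*γ-1) = t * (r-1) := by
        rw [ht, ← Real.rpow_add_one hr1'.ne']; congr 1; ring
      have hbern := bern hr0 hγ'
      rw [e1, e2, e3]
      nlinarith [mul_nonneg tpos.le (by linarith : (0:ℝ) ≤ s - r + 2*γ*(r-1)),
        mul_nonneg (mul_nonneg tpos.le (by linarith : (0:ℝ) ≤ 1 - s))
          (by linarith : (0:ℝ) ≤ r - s)]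
    have hval : ∫ r in Ioo (1:ℝ) 2, -(2*γ * (r-1) ^ (2*γ-1)) = -1 := by
      rw [integral_neg, integral_const_mul, L2 hγ1]
      field_simp
    linarith
  have hsplit := split_int hGint
  have hdiff : ∫ r in Ioo (0:ℝ) 2, G r =
      (∫ r in Ioo (0:ℝ) 2, r ^ (2-4*γ) * |1-r| ^ (2*γ-2)) -
        ∫ r in Ioo (0:ℝ) 2, r ^ (2-2*γ) * |1-r| ^ (2*γ-2) := integral_sub hg hf
  nlinarith

lemma himg : (fun x : ℝ => x⁻¹) '' (Ioo (0:ℝ) 2) = Ioi (1/2 : ℝ) := by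
  ext x
  simp only [mem_image, mem_Ioo, mem_Ioi]
  constructor
  · rintro ⟨y, ⟨hy0, hy2⟩, rfl⟩
    rw [show (1:ℝ)/2 = 2⁻¹ by norm_num]
    exact inv_strictAnti₀ hy0 hy2
  · intro hx
    have hx0 : (0:ℝ) < x := lt_trans (by norm_num) hx
    refine ⟨x⁻¹, ⟨inv_pos.mpr hx0, ?_⟩, inv_inv x⟩
    have := inv_strictAnti₀ (by norm_num : (0:ℝ) < 1/2) hx
    norm_num at this
    exact this

lemma hderiv : ∀ x ∈ Ioo (0:ℝ) 2,
    HasDerivWithinAt (fun x : ℝ => x⁻¹) (-((x:ℝ)^2)⁻¹) (Ioo (0:ℝ) 2) x :=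
  fun x hx => (hasDerivAt_inv (ne_of_gt hx.1)).hasDerivWithinAt

lemma hinj : InjOn (fun x : ℝ => x⁻¹) (Ioo (0:ℝ) 2) :=
  fun _ _ _ _ h => inv_injective h

lemma rpow_two' {x : ℝ} : x ^ (2:ℝ) = x ^ 2 := by
  rw [show (2:ℝ) = ((2:ℕ):ℝ) by norm_num, Real.rpow_natCast]

lemma comp1 {γ : ℝ} {x : ℝ} (hx0 : 0 < x) :
    |(-((x:ℝ)^2)⁻¹)| * ((x⁻¹) ^ (-2 : ℝ) * |1 - x⁻¹| ^ (2*γ-2)) =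
      x ^ (2-2*γ) * |1-x| ^ (2*γ-2) := by
  have hx2 : (0:ℝ) < x^2 := pow_pos hx0 2
  have habs : |(-((x:ℝ)^2)⁻¹)| = (x^2)⁻¹ := by
    rw [abs_neg, abs_inv, abs_of_pos hx2]
  have ha : (x⁻¹ : ℝ) ^ (-2 : ℝ) = x^2 := by
    rw [Real.inv_rpow hx0.le, Real.rpow_neg hx0.le, inv_inv, rpow_two']
  have hb : |1 - x⁻¹| = |1-x| * x⁻¹ := by
    rw [show (1 - x⁻¹ : ℝ) = (x - 1) * x⁻¹ by field_simp, abs_mul, abs_inv,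
      abs_of_pos hx0, abs_sub_comm]
  have hc : ((|1-x| * x⁻¹ : ℝ)) ^ (2*γ-2) = |1-x| ^ (2*γ-2) * (x ^ (2*γ-2))⁻¹ := by
    rw [Real.mul_rpow (abs_nonneg _) (inv_nonneg.mpr hx0.le), Real.inv_rpow hx0.le]
  have hd : x ^ (2-2*γ) = (x ^ (2*γ-2))⁻¹ := by
    rw [show (2-2*γ:ℝ) = -(2*γ-2) by ring, Real.rpow_neg hx0.le]
  have hB : (0:ℝ) < x ^ (2*γ-2) := Real.rpow_pos_of_pos hx0 _
  rw [habs, ha, hb, hc, hd]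
  field_simp

lemma comp2 {γ : ℝ} {x : ℝ} (hx0 : 0 < x) :
    |(-((x:ℝ)^2)⁻¹)| * (|x⁻¹ - (x⁻¹)^2| ^ (2*γ-2)) =
      x ^ (2-4*γ) * |1-x| ^ (2*γ-2) := by
  have hx2 : (0:ℝ) < x^2 := pow_pos hx0 2
  have habs : |(-((x:ℝ)^2)⁻¹)| = (x^2)⁻¹ := by
    rw [abs_neg, abs_inv, abs_of_pos hx2]
  have hb : |x⁻¹ - (x⁻¹)^2| = |1-x| * (x^2)⁻¹ := by
    rw [show (x⁻¹ - (x⁻¹)^2 : ℝ) = (x - 1) * (x^2)⁻¹ by field_simp, abs_mul,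
      abs_inv, abs_of_pos hx2, abs_sub_comm]
  have hc : ((|1-x| * (x^2)⁻¹ : ℝ)) ^ (2*γ-2) =
      |1-x| ^ (2*γ-2) * (x ^ (2*(2*γ-2)))⁻¹ := by
    rw [Real.mul_rpow (abs_nonneg _) (inv_nonneg.mpr hx2.le), Real.inv_rpow hx2.le,
      ← rpow_two', ← Real.rpow_mul hx0.le]
  have hd : x ^ (2-4*γ) = (x^2)⁻¹ * (x ^ (2*(2*γ-2)))⁻¹ := by
    rw [show (2-4*γ:ℝ) = (-2) + (-(2*(2*γ-2))) by ring, Real.rpow_add hx0,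
      Real.rpow_neg hx0.le, Real.rpow_neg hx0.le, rpow_two']
  have hB : (0:ℝ) < x ^ (2*(2*γ-2)) := Real.rpow_pos_of_pos hx0 _
  rw [habs, hb, hc, hd]
  ring

-- transfer of integrals
lemma transfer (F : ℝ → ℝ) :
    ∫ x in Ioi (1/2 : ℝ), F x = ∫ x in Ioo (0:ℝ) 2, |(-((x:ℝ)^2)⁻¹)| * F x⁻¹ := by
  have h := integral_image_eq_integral_abs_deriv_smul measurableSet_Ioo hderiv hinj F
  rw [himg] at h
  simpa [smul_eq_mul] using h

lemma transfer_int (F : ℝ → ℝ) :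
    IntegrableOn F (Ioi (1/2:ℝ)) volume ↔
      IntegrableOn (fun x => |(-((x:ℝ)^2)⁻¹)| * F x⁻¹) (Ioo (0:ℝ) 2) volume := by
  have h := integrableOn_image_iff_integrableOn_abs_deriv_smul
    measurableSet_Ioo hderiv hinj F
  rw [himg] at h
  simpa [smul_eq_mul] using h

theorem stmt8 (γ : ℝ) (hγ : γ ∈ Set.Ioo (1/2 : ℝ) (3/4 : ℝ)) :
    (IntegrableOn (fun r : ℝ => r ^ (2 - 2*γ) * |1 - r| ^ (2*γ - 2)) (Set.Ioo 0 2) volume ∧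
     IntegrableOn (fun r : ℝ => r ^ (2 - 4*γ) * |1 - r| ^ (2*γ - 2)) (Set.Ioo 0 2) volume ∧
     ∫ r in Set.Ioo (0 : ℝ) 2, r ^ (2 - 2*γ) * |1 - r| ^ (2*γ - 2) <
       ∫ r in Set.Ioo (0 : ℝ) 2, r ^ (2 - 4*γ) * |1 - r| ^ (2*γ - 2)) ∧
    (IntegrableOn (fun r : ℝ => r ^ (-2 : ℝ) * |1 - r| ^ (2*γ - 2)) (Set.Ioi (1/2)) volume ∧
     IntegrableOn (fun r : ℝ => |r - r^2| ^ (2*γ - 2)) (Set.Ioi (1/2)) volume ∧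
     ∫ r in Set.Ioi ((1:ℝ)/2), r ^ (-2 : ℝ) * |1 - r| ^ (2*γ - 2) <
       ∫ r in Set.Ioi ((1:ℝ)/2), |r - r^2| ^ (2*γ - 2)) := by
  obtain ⟨hγ1, hγ2⟩ := hγ
  have hq : (-1:ℝ) < 2*γ - 2 := by linarith
  have hf : IntegrableOn (fun r : ℝ => r ^ (2 - 2*γ) * |1 - r| ^ (2*γ - 2))
      (Set.Ioo (0:ℝ) 2) volume := main_int (by linarith) hq
  have hg : IntegrableOn (fun r : ℝ => r ^ (2 - 4*γ) * |1 - r| ^ (2*γ - 2))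
      (Set.Ioo (0:ℝ) 2) volume := main_int (by linarith) hq
  have hkey := key hγ1 hγ2
  refine ⟨⟨hf, hg, hkey⟩, ?_, ?_, ?_⟩
  · exact (transfer_int _).mpr
      (hf.congr_fun (fun x hx => (comp1 hx.1).symm) measurableSet_Ioo)
  · exact (transfer_int _).mpr
      (hg.congr_fun (fun x hx => (comp2 hx.1).symm) measurableSet_Ioo)
  · have e1 : ∫ r in Set.Ioi ((1:ℝ)/2), r ^ (-2 : ℝ) * |1 - r| ^ (2*γ - 2)
        = ∫ r in Set.Ioo (0:ℝ) 2, r ^ (2 - 2*γ) * |1 - r| ^ (2*γ - 2) := by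
      rw [transfer]
      exact setIntegral_congr_fun measurableSet_Ioo (fun x hx => comp1 hx.1)
    have e2 : ∫ r in Set.Ioi ((1:ℝ)/2), |r - r^2| ^ (2*γ - 2)
        = ∫ r in Set.Ioo (0:ℝ) 2, r ^ (2 - 4*γ) * |1 - r| ^ (2*γ - 2) := by
      rw [transfer]
      exact setIntegral_congr_fun measurableSet_Ioo (fun x hx => comp2 hx.1)
    rw [e1, e2]
    exact hkey
end

section
/- Let ξ, η ∈ ℝ² satisfy 4 ≤ |ξ| ≤ 7, 4 ≤ |η| ≤ 5, and 6 ≤ |ξ−η| ≤ 7. Then |sin(θ(ξ,η) − θ(ξ,ξ−η))| ≥ √210/490 > 1/40, where θ(u,w) ∈ [0,π] is the Euclidean angle between nonzero vectors u, w ∈ ℝ². -/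
open MeasureTheory Set

set_option maxHeartbeats 1600000 in
theorem stmt17 (ξ η : EuclideanSpace ℝ (Fin 2))
    (hξ₁ : 4 ≤ ‖ξ‖) (hξ₂ : ‖ξ‖ ≤ 7)
    (hη₁ : 4 ≤ ‖η‖) (hη₂ : ‖η‖ ≤ 5)
    (hζ₁ : 6 ≤ ‖ξ - η‖) (hζ₂ : ‖ξ - η‖ ≤ 7) :
    Real.sqrt 210 / 490 ≤
      |Real.sin (InnerProductGeometry.angle ξ η - InnerProductGeometry.angle ξ (ξ - η))| ∧
    (1:ℝ)/40 < Real.sqrt 210 / 490 := by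
  constructor
  · set a := ‖η‖ with ha_def
    set b := ‖ξ - η‖ with hb_def
    set c := ‖ξ‖ with hc_def
    have ha : (0:ℝ) < a := by linarith
    have hb : (0:ℝ) < b := by linarith
    have hc : (0:ℝ) < c := by linarith
    have hca : (0:ℝ) < c * a := mul_pos hc ha
    have hcb : (0:ℝ) < c * b := mul_pos hc hb
    set p : ℝ := inner ℝ ξ η with hp_def
    have hb2 : b ^ 2 = c ^ 2 - 2 * p + a ^ 2 := by
      rw [hb_def, hp_def, @norm_sub_sq_real]
    have hp : p = (c ^ 2 + a ^ 2 - b ^ 2) / 2 := by linarith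
    have hinner2 : (inner ℝ ξ (ξ - η) : ℝ) = c ^ 2 - p := by
      rw [inner_sub_right, real_inner_self_eq_norm_sq]
    set Q : ℝ := c ^ 2 * a ^ 2 - p ^ 2 with hQ_def
    clear_value Q p c b a
    -- key lower bound on Q via Heron's formula
    have f1 : (3:ℝ) ≤ b + a - c := by linarith
    have f2 : (5:ℝ) ≤ b + c - a := by linarith
    have f3 : (1:ℝ) ≤ c + a - b := by linarith
    have f4 : (14:ℝ) ≤ a + b + c := by linarith
    have hm1 : (3:ℝ) * 5 ≤ (b + a - c) * (b + c - a) :=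
      mul_le_mul f1 f2 (by norm_num) (by linarith)
    have hm2 : (3:ℝ) * 5 * 1 ≤ (b + a - c) * (b + c - a) * (c + a - b) :=
      mul_le_mul hm1 f3 (by norm_num) (by nlinarith)
    have hm3 : (3:ℝ) * 5 * 1 * 14 ≤ (b + a - c) * (b + c - a) * (c + a - b) * (a + b + c) :=
      mul_le_mul hm2 f4 (by norm_num) (by nlinarith)
    have hid : Q = (b + a - c) * (b + c - a) * (c + a - b) * (a + b + c) / 4 := by
      rw [hQ_def, hp]; ring
    have h210 : (210:ℝ) / 4 ≤ Q := by rw [hid]; linarith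
    have hQ0 : (0:ℝ) ≤ Q := by linarith
    have hsin1 : Real.sin (InnerProductGeometry.angle ξ η) = Real.sqrt Q / (c * a) := by
      have h := InnerProductGeometry.sin_angle_mul_norm_mul_norm ξ η
      rw [real_inner_self_eq_norm_sq, real_inner_self_eq_norm_sq, ← hp_def,
        ← ha_def, ← hc_def] at h
      have harg : c ^ 2 * a ^ 2 - p * p = Q := by rw [hQ_def]; ring
      rw [harg] at h
      rw [eq_div_iff hca.ne']; exact h
    have hsin2 : Real.sin (InnerProductGeometry.angle ξ (ξ - η)) = Real.sqrt Q / (c * b) := by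
      have h := InnerProductGeometry.sin_angle_mul_norm_mul_norm ξ (ξ - η)
      rw [real_inner_self_eq_norm_sq, real_inner_self_eq_norm_sq, hinner2,
        ← hb_def, ← hc_def] at h
      have harg : c ^ 2 * b ^ 2 - (c ^ 2 - p) * (c ^ 2 - p) = Q := by
        rw [hQ_def]; linear_combination (c ^ 2) * hb2
      rw [harg] at h
      rw [eq_div_iff hcb.ne']; exact h
    have hcos1 : Real.cos (InnerProductGeometry.angle ξ η) = p / (c * a) := by
      rw [InnerProductGeometry.cos_angle, ← hp_def, ← ha_def, ← hc_def]
    have hcos2 : Real.cos (InnerProductGeometry.angle ξ (ξ - η)) = (c ^ 2 - p) / (c * b) := by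
      rw [InnerProductGeometry.cos_angle, hinner2, ← hb_def, ← hc_def]
    have hval : Real.sin (InnerProductGeometry.angle ξ η - InnerProductGeometry.angle ξ (ξ - η))
        = Real.sqrt Q * (c ^ 2 - 2 * p) / (c ^ 2 * a * b) := by
      rw [Real.sin_sub, hsin1, hsin2, hcos1, hcos2]
      field_simp
      ring
    have hsqQ : Real.sqrt 210 / 2 ≤ Real.sqrt Q := by
      have : Real.sqrt (210 / 4) ≤ Real.sqrt Q := Real.sqrt_le_sqrt h210
      rwa [show (210:ℝ)/4 = (Real.sqrt 210 / 2)^2 by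
        rw [div_pow, Real.sq_sqrt (by norm_num : (0:ℝ) ≤ 210)]; norm_num,
        Real.sqrt_sq (by positivity)] at this
    have h11 : (11:ℝ) ≤ c ^ 2 - 2 * p := by
      have hb36 : (6:ℝ) ^ 2 ≤ b ^ 2 := pow_le_pow_left₀ (by norm_num) hζ₁ 2
      have ha25 : a ^ 2 ≤ 5 ^ 2 := pow_le_pow_left₀ ha.le hη₂ 2
      nlinarith [hb2, hb36, ha25]
    have hden : (0:ℝ) < c ^ 2 * a * b := by positivity
    have hden_le : c ^ 2 * a * b ≤ 1715 := by
      have hc49 : c ^ 2 ≤ 7 ^ 2 := pow_le_pow_left₀ hc.le hξ₂ 2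
      have t1 : c ^ 2 * a ≤ 49 * 5 :=
        mul_le_mul (show c ^ 2 ≤ (49:ℝ) by linarith) hη₂ ha.le (by norm_num)
      have t2 : c ^ 2 * a * b ≤ 49 * 5 * 7 :=
        mul_le_mul t1 hζ₂ hb.le (by norm_num)
      linarith
    have hs210 : (0:ℝ) ≤ Real.sqrt 210 := Real.sqrt_nonneg _
    have hsQ0 : (0:ℝ) ≤ Real.sqrt Q := Real.sqrt_nonneg _
    have hnum : Real.sqrt 210 / 2 * 11 ≤ Real.sqrt Q * (c ^ 2 - 2 * p) :=
      mul_le_mul hsqQ h11 (by norm_num) hsQ0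
    have habs : (0:ℝ) ≤ Real.sqrt Q * (c ^ 2 - 2 * p) / (c ^ 2 * a * b) := by
      apply div_nonneg _ hden.le
      exact mul_nonneg hsQ0 (by linarith)
    rw [hval, abs_of_nonneg habs, div_le_div_iff₀ (by norm_num) hden]
    have e1 : Real.sqrt 210 * (c ^ 2 * a * b) ≤ Real.sqrt 210 * 1715 :=
      mul_le_mul_of_nonneg_left hden_le hs210
    have e2 : Real.sqrt 210 / 2 * 11 * 490 ≤ Real.sqrt Q * (c ^ 2 - 2 * p) * 490 :=
      mul_le_mul_of_nonneg_right hnum (by norm_num)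
    linarith
  · have h1 : Real.sqrt 210 ^ 2 = 210 := Real.sq_sqrt (by norm_num)
    have h2 : (0:ℝ) ≤ Real.sqrt 210 := Real.sqrt_nonneg _
    nlinarith [h1, h2]
end

section
/- Let γ ∈ (1/2,1) and c₀ = 1/(2π). Let u₀-hat : ℝ² \ {0} → ℂ² be measurable with ξ·û₀(ξ) = 0 (bilinear dot product) for all ξ ≠ 0, suppose the scalar function ξ ↦ û₀(ξ)·e_{ξ⊥} depends only on |ξ|, and suppose ∫_{ℝ²} |û₀(η)| |û₀(ξ−η)| dη < ∞ for every ξ ≠ 0. Then the function v(ξ,t) = û₀(ξ) e^{−|ξ|^{2γ}t} satisfies, for all ξ ≠ 0 and t ≥ 0, the mild two-dimensional fractional Navier–Stokes equation in Fourier variables: v(ξ,t) = û₀(ξ) e^{−|ξ|^{2γ}t} + c₀ ∫_0^t |ξ| e^{−|ξ|^{2γ}s} ∫_{ℝ²} v(η,t−s) ⊙_ξ v(ξ−η,t−s) dη ds; that is, the nonlinear term vanishes identically, and vortex initial data evolve by pure fractional heat flow for all time. -/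
open MeasureTheory Set

noncomputable instance : MeasurableSpace (EuclideanSpace ℂ (Fin 2)) := borel _
instance : BorelSpace (EuclideanSpace ℂ (Fin 2)) := ⟨rfl⟩

namespace Stmt19Aux

open Submodule

local notation "E" => EuclideanSpace ℝ (Fin 2)
local notation "F" => EuclideanSpace ℂ (Fin 2)

lemma complexify_apply (x : E) (j : Fin 2) : complexify x j = (x j : ℂ) := rfl

lemma perp_apply_zero (x : E) : perp x 0 = -(x 1) := rfl
lemma perp_apply_one (x : E) : perp x 1 = x 0 := rfl

lemma complexify_smul (r : ℝ) (x : E) : complexify (r • x) = (r : ℂ) • complexify x := by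
  ext j; simp [complexify_apply, PiLp.smul_apply, smul_eq_mul]

lemma complexify_sub (x y : E) : complexify (x - y) = complexify x - complexify y := by
  ext j; simp [complexify_apply, PiLp.sub_apply]

lemma complexify_neg (x : E) : complexify (-x) = -complexify x := by
  ext j; simp [complexify_apply, PiLp.neg_apply]

lemma dotC_complexify (x y : E) :
    dotC (complexify x) (complexify y) = ((inner ℝ x y : ℝ) : ℂ) := by
  simp [dotC, complexify_apply, PiLp.inner_apply, RCLike.inner_apply, Fin.sum_univ_two]
  ring

lemma dotC_smul_right (a b : F) (c : ℂ) : dotC a (c • b) = c * dotC a b := by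
  simp [dotC, PiLp.smul_apply, smul_eq_mul, Finset.mul_sum, Fin.sum_univ_two]
  ring

lemma norm_perp (x : E) : ‖perp x‖ = ‖x‖ := by
  simp [EuclideanSpace.norm_eq, Fin.sum_univ_two, perp_apply_zero, perp_apply_one]
  ring_nf

lemma real_smul (r : ℝ) (x : F) : r • x = (r : ℂ) • x := by
  ext j; simp [PiLp.smul_apply, Complex.real_smul]

lemma projPerp_smul (ξ : E) (c : ℂ) (a : F) : projPerp ξ (c • a) = c • projPerp ξ a := by
  simp [projPerp, dotC_smul_right, smul_sub, mul_smul]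

lemma odot_smul (ξ : E) (c d : ℂ) (a b : F) :
    odot ξ (c • a) (d • b) = (c * d) • odot ξ a b := by
  simp only [odot, dotC_smul_right, projPerp_smul, smul_add, smul_smul]
  ring_nf

section refl

variable (ξ : E)

lemma inner_two (x y : E) : (inner ℝ x y : ℝ) = x 0 * y 0 + x 1 * y 1 := by
  simp [PiLp.inner_apply, RCLike.inner_apply, Fin.sum_univ_two]
  ring

lemma refl_coord (v : E) (j : Fin 2) :
    (reflection (ℝ ∙ ξ) v) j = 2*((inner ℝ ξ v : ℝ)/‖ξ‖^2) * ξ j - v j := by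
  rw [reflection_singleton_apply]
  simp [PiLp.smul_apply, smul_eq_mul]
  ring

lemma refl_fix : reflection (ℝ ∙ ξ) ξ = ξ :=
  reflection_mem_subspace_eq_self (Submodule.mem_span_singleton_self ξ)

lemma inner_refl (v : E) : (inner ℝ ξ (reflection (ℝ ∙ ξ) v) : ℝ) = inner ℝ ξ v := by
  have h := (reflection (ℝ ∙ ξ)).inner_map_map ξ v
  rwa [refl_fix] at h

lemma norm_sq (hξ : ξ ≠ 0) : ‖ξ‖^2 = ξ 0 ^ 2 + ξ 1 ^ 2 := by
  rw [EuclideanSpace.norm_eq, Real.sq_sqrt] <;> simp [Fin.sum_univ_two] <;> positivity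

/-- `perp (R v) = - R (perp v)` for the reflection across the line spanned by `ξ`. -/
lemma perp_refl (hξ : ξ ≠ 0) (v : E) :
    perp (reflection (ℝ ∙ ξ) v) = -(reflection (ℝ ∙ ξ) (perp v)) := by
  have hn : ‖ξ‖ ≠ 0 := norm_ne_zero_iff.2 hξ
  have hsq := norm_sq ξ hξ
  ext j
  fin_cases j <;>
  · simp only [Fin.mk_zero, Fin.mk_one, Fin.isValue, PiLp.neg_apply, perp_apply_zero,
      perp_apply_one, refl_coord, inner_two]
    field_simp
    rw [hsq]
    ring

/-- Key scalar identity: `dotC (eC ξ) (complexify (R v)) = dotC (eC ξ) (complexify v)`. -/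
lemma dotC_eC_refl (v : E) :
    dotC (eC ξ) (complexify (reflection (ℝ ∙ ξ) v)) = dotC (eC ξ) (complexify v) := by
  simp only [eC, dotC_complexify]
  norm_cast
  rw [real_inner_smul_left, real_inner_smul_left, inner_refl]

lemma projPerp_complexify (w : E) :
    projPerp ξ (complexify w) =
      complexify (w - ((inner ℝ ξ w : ℝ)/‖ξ‖^2) • ξ) := by
  rw [complexify_sub, projPerp, eC, dotC_complexify, complexify_smul, complexify_smul,
    smul_smul, real_inner_smul_left]
  congr 2
  push_cast
  rw [div_eq_mul_inv, pow_two, mul_inv]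
  push_cast
  ring

/-- Key vector identity: `projPerp ξ (complexify (R v)) = - projPerp ξ (complexify v)`. -/
lemma projPerp_refl (v : E) :
    projPerp ξ (complexify (reflection (ℝ ∙ ξ) v)) = -(projPerp ξ (complexify v)) := by
  rw [projPerp_complexify, projPerp_complexify, inner_refl, ← complexify_neg]
  congr 1
  ext j
  fin_cases j <;>
  · simp only [Fin.mk_zero, Fin.mk_one, Fin.isValue, complexify_apply, Complex.ofReal_inj,
      PiLp.sub_apply, PiLp.neg_apply, PiLp.smul_apply, smul_eq_mul, refl_coord]
    ring

/-- `odot` flips sign under reflection of both (real) arguments. -/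
lemma odot_refl (a b : E) :
    odot ξ (complexify (reflection (ℝ ∙ ξ) a)) (complexify (reflection (ℝ ∙ ξ) b)) =
      -(odot ξ (complexify a) (complexify b)) := by
  simp only [odot, dotC_eC_refl, projPerp_refl, smul_neg, ← neg_add, smul_neg]

/-- `unitPerp (R v) = -(R (unitPerp v))`. -/
lemma unitPerp_refl (hξ : ξ ≠ 0) (v : E) :
    unitPerp (reflection (ℝ ∙ ξ) v) = -(reflection (ℝ ∙ ξ) (unitPerp v)) := by
  rw [unitPerp, perp_refl ξ hξ v, norm_neg, (reflection (ℝ ∙ ξ)).norm_map, smul_neg, unitPerp,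
    (reflection (ℝ ∙ ξ)).map_smul]

end refl

/-- Divergence-free vectors in 2D are multiples of `unitPerp`. -/
lemma rep (u0 : EuclideanSpace ℝ (Fin 2) → F) (v : E) (hv : v ≠ 0)
    (hdiv : dotC (complexify v) (u0 v) = 0) :
    u0 v = dotC (u0 v) (complexify (unitPerp v)) • complexify (unitPerp v) := by
  have hn : ‖v‖ ≠ 0 := norm_ne_zero_iff.2 hv
  have hnC : ((‖v‖ : ℝ) : ℂ) ≠ 0 := by exact_mod_cast hn
  have hsq : ((‖v‖ : ℝ) : ℂ)^2 = (v 0 : ℂ)^2 + (v 1 : ℂ)^2 := by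
    exact_mod_cast congrArg (fun r : ℝ => (r : ℂ)) (norm_sq v hv)
  have hd : (v 0 : ℂ) * u0 v 0 + (v 1 : ℂ) * u0 v 1 = 0 := by
    simpa [dotC, complexify_apply, Fin.sum_univ_two] using hdiv
  ext j
  fin_cases j <;>
  · simp only [Fin.mk_zero, Fin.mk_one, Fin.isValue, dotC, Fin.sum_univ_two, complexify_apply,
      unitPerp, norm_perp, PiLp.smul_apply, smul_eq_mul, perp_apply_zero, perp_apply_one]
    push_cast
    field_simp
    first
    | linear_combination (u0 v 0) * hsq + (v 0 : ℂ) * hd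
    | linear_combination (u0 v 1) * hsq + (v 1 : ℂ) * hd

lemma odot_neg_neg (ξ : E) (a b : F) : odot ξ (-a) (-b) = odot ξ a b := by
  have h := odot_smul ξ (-1) (-1) a b
  simpa using h

/-- The nonlinear integrand integrates to zero for a vortex. -/
lemma integral_odot_zero (u0 : EuclideanSpace ℝ (Fin 2) → F)
    (hdiv : ∀ v : E, v ≠ 0 → dotC (complexify v) (u0 v) = 0)
    (hrad : ∀ v w : E, v ≠ 0 → w ≠ 0 → ‖v‖ = ‖w‖ →
      dotC (u0 v) (complexify (unitPerp v)) = dotC (u0 w) (complexify (unitPerp w)))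
    (ξ : E) (hξ : ξ ≠ 0) (f g : ℝ → ℝ) :
    (∫ η : EuclideanSpace ℝ (Fin 2),
      odot ξ (f ‖η‖ • u0 η) (g ‖ξ - η‖ • u0 (ξ - η))) = 0 := by
  set R := reflection (ℝ ∙ ξ) with hR
  set F0 : E → F := fun η => odot ξ (f ‖η‖ • u0 η) (g ‖ξ - η‖ • u0 (ξ - η)) with hF0
  have key : ∀ η : E, η ≠ 0 → η ≠ ξ → F0 (R η) = -F0 η := by
    intro η hη0 hηξ
    have hξη0 : ξ - η ≠ 0 := sub_ne_zero.2 (Ne.symm hηξ)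
    have hRη0 : R η ≠ 0 := fun h => hη0 (R.injective (h.trans (map_zero R).symm))
    have hRξη0 : R (ξ - η) ≠ 0 := fun h => hξη0 (R.injective (h.trans (map_zero R).symm))
    have hnR : ‖R η‖ = ‖η‖ := R.norm_map η
    have hnR' : ‖R (ξ - η)‖ = ‖ξ - η‖ := R.norm_map _
    have hsub : ξ - R η = R (ξ - η) := by rw [map_sub, refl_fix]
    set cA := dotC (u0 η) (complexify (unitPerp η)) with hcA
    set cB := dotC (u0 (ξ - η)) (complexify (unitPerp (ξ - η))) with hcB
    have hu1 : u0 (R η) = cA • -(complexify (R (unitPerp η))) := by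
      rw [rep u0 (R η) hRη0 (hdiv _ hRη0), hrad (R η) η hRη0 hη0 hnR,
        unitPerp_refl ξ hξ η, complexify_neg]
    have hu2 : u0 (R (ξ - η)) = cB • -(complexify (R (unitPerp (ξ - η)))) := by
      rw [rep u0 (R (ξ - η)) hRξη0 (hdiv _ hRξη0), hrad (R (ξ - η)) (ξ - η) hRξη0 hξη0 hnR',
        unitPerp_refl ξ hξ (ξ - η), complexify_neg]
    have hu1' : u0 η = cA • complexify (unitPerp η) := rep u0 η hη0 (hdiv _ hη0)
    have hu2' : u0 (ξ - η) = cB • complexify (unitPerp (ξ - η)) := rep u0 (ξ - η) hξη0 (hdiv _ hξη0)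
    have hL : F0 (R η) = (((f ‖η‖ : ℂ) * cA) * ((g ‖ξ - η‖ : ℂ) * cB)) •
        odot ξ (complexify (R (unitPerp η))) (complexify (R (unitPerp (ξ - η)))) := by
      simp only [hF0, hnR, hsub, hnR', hu1, hu2, real_smul, smul_neg, smul_smul, ← neg_smul]
      rw [odot_smul]
      ring_nf
    have hRt : F0 η = (((f ‖η‖ : ℂ) * cA) * ((g ‖ξ - η‖ : ℂ) * cB)) •
        odot ξ (complexify (unitPerp η)) (complexify (unitPerp (ξ - η))) := by
      simp only [hF0, hu1', hu2', real_smul, smul_smul]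
      rw [odot_smul]
    rw [hL, hRt, odot_refl, smul_neg]
  have hmp : (∫ η : E, F0 (R η)) = ∫ η : E, F0 η := integral_comp R F0
  have hmeas0 : (volume : Measure E) ({0, ξ} : Set E) = 0 :=
    ((Set.finite_singleton ξ).insert 0).measure_zero volume
  have hae : ∀ᵐ η : E ∂(volume : Measure E), F0 (R η) = -F0 η := by
    filter_upwards [compl_mem_ae_iff.2 hmeas0] with η hη
    simp only [Set.mem_compl_iff, Set.mem_insert_iff, Set.mem_singleton_iff, not_or] at hη
    exact key η hη.1 hη.2
  have h2 : (∫ η : E, F0 (R η)) = -∫ η : E, F0 η := by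
    rw [integral_congr_ae hae, integral_neg]
  have h3 : (∫ η : E, F0 η) = -∫ η : E, F0 η := hmp ▸ h2
  have h4 : (2 : ℝ) • ∫ η : E, F0 η = 0 := by
    rw [two_smul]
    exact eq_neg_iff_add_eq_zero.mp h3 |>.symm ▸ (eq_neg_iff_add_eq_zero.mp h3)
  have := smul_eq_zero.mp h4
  exact this.resolve_left (by norm_num)

end Stmt19Aux

theorem stmt19 (γ : ℝ) (hγ : γ ∈ Set.Ioo (1/2 : ℝ) 1)
    (u0 : EuclideanSpace ℝ (Fin 2) → EuclideanSpace ℂ (Fin 2))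
    (hmeas : Measurable u0)
    (hdiv : ∀ ξ : EuclideanSpace ℝ (Fin 2), ξ ≠ 0 → dotC (complexify ξ) (u0 ξ) = 0)
    (hrad : ∀ ξ ζ : EuclideanSpace ℝ (Fin 2), ξ ≠ 0 → ζ ≠ 0 → ‖ξ‖ = ‖ζ‖ →
      dotC (u0 ξ) (complexify (unitPerp ξ)) = dotC (u0 ζ) (complexify (unitPerp ζ)))
    (hint : ∀ ξ : EuclideanSpace ℝ (Fin 2), ξ ≠ 0 →
      Integrable (fun η => ‖u0 η‖ * ‖u0 (ξ - η)‖)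
        (volume : Measure (EuclideanSpace ℝ (Fin 2)))) :
    ∀ ξ : EuclideanSpace ℝ (Fin 2), ξ ≠ 0 → ∀ t : ℝ, 0 ≤ t →
      Real.exp (-(‖ξ‖ ^ (2*γ)) * t) • u0 ξ =
        Real.exp (-(‖ξ‖ ^ (2*γ)) * t) • u0 ξ +
          (1/(2*Real.pi)) • ∫ s in (0:ℝ)..t, (‖ξ‖ * Real.exp (-(‖ξ‖ ^ (2*γ)) * s)) •
            ∫ η : EuclideanSpace ℝ (Fin 2),
              odot ξ (Real.exp (-(‖η‖ ^ (2*γ)) * (t - s)) • u0 η)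
                (Real.exp (-(‖ξ - η‖ ^ (2*γ)) * (t - s)) • u0 (ξ - η)) := by
  intro ξ hξ t ht
  have hzero : ∀ s : ℝ,
      (∫ η : EuclideanSpace ℝ (Fin 2),
        odot ξ (Real.exp (-(‖η‖ ^ (2*γ)) * (t - s)) • u0 η)
          (Real.exp (-(‖ξ - η‖ ^ (2*γ)) * (t - s)) • u0 (ξ - η))) = 0 := fun s =>
    Stmt19Aux.integral_odot_zero u0 hdiv hrad ξ hξ
      (fun r => Real.exp (-(r ^ (2*γ)) * (t - s))) (fun r => Real.exp (-(r ^ (2*γ)) * (t - s)))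
  simp only [hzero, smul_zero, intervalIntegral.integral_zero, add_zero]
end
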